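/- Let G be a finite group, x ∈ G, and π an automorphism of the directed reduced power graph →RP(G). If the ≃-class x̂ is of Type IV with parameter (p,q), then the ≃-class of x^π is also of Type IV with parameter (p,q). -/

import Mathlib

open Subgroup Set

variable (G : Type*) [Group G]

/-- Arc of the directed reduced power graph `→RP(G)`: from `x` to `y` iff `⟨y⟩ ⊊ ⟨x⟩`. -/
def rpArc (x y : G) : Prop := zpowers y < zpowers x

/-- Adjacency in the undirected reduced power graph `RP(G)`:
`x` and `y` are adjacent iff `⟨x⟩ ⊊ ⟨y⟩` or `⟨y⟩ ⊊ ⟨x⟩`. -/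
def rpAdj (x y : G) : Prop := zpowers x < zpowers y ∨ zpowers y < zpowers x

/-- `x ≃ y` iff `x` and `y` have the same neighbourhood in `RP(G)`. -/
def simEq (x y : G) : Prop := ∀ z : G, rpAdj G x z ↔ rpAdj G y z

/-- The `≃`-class `x̂` of `x`. -/
def hatCls (x : G) : Set G := {y | simEq G y x}

/-- The `∼`-class `[x]` of `x`: the set of generators of `⟨x⟩`. -/
def genCls (x : G) : Set G := {y | zpowers y = zpowers x}

/-- The automorphism group of the directed reduced power graph `→RP(G)`,
as a subgroup of the permutations of `G`. -/
def DRPAut : Subgroup (Equiv.Perm G) where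
  carrier := {π | ∀ x y : G, rpArc G (π x) (π y) ↔ rpArc G x y}
  one_mem' := fun _ _ => Iff.rfl
  mul_mem' := by
    intro a b ha hb x y
    simp only [Equiv.Perm.mul_apply]
    exact (ha (b x) (b y)).trans (hb x y)
  inv_mem' := by
    intro a ha x y
    have h := ha (a⁻¹ x) (a⁻¹ y)
    simp only [Equiv.Perm.coe_inv, Equiv.apply_symm_apply] at h
    exact h.symm

/-- The automorphism group of the undirected reduced power graph `RP(G)`,
as a subgroup of the permutations of `G`. -/
def RPAut : Subgroup (Equiv.Perm G) where
  carrier := {π | ∀ x y : G, rpAdj G (π x) (π y) ↔ rpAdj G x y}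
  one_mem' := fun _ _ => Iff.rfl
  mul_mem' := by
    intro a b ha hb x y
    simp only [Equiv.Perm.mul_apply]
    exact (ha (b x) (b y)).trans (hb x y)
  inv_mem' := by
    intro a ha x y
    have h := ha (a⁻¹ x) (a⁻¹ y)
    simp only [Equiv.Perm.coe_inv, Equiv.apply_symm_apply] at h
    exact h.symm

/-- `⟨x⟩` is a maximal cyclic subgroup of `G`. -/
def IsMaxCyc (x : G) : Prop := ∀ y : G, zpowers x ≤ zpowers y → zpowers x = zpowers y

/-- The `≃`-class of `x` is of Type I: it is a single `∼`-class, `x̂ = [x]`. -/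
def TypeI (x : G) : Prop := hatCls G x = genCls G x

/-- The `≃`-class of `x` is of Type II: it is a union of `r ≥ 2` `∼`-classes whose
cyclic subgroups are distinct maximal cyclic subgroups of `G`, all of the same order. -/
def TypeII (x : G) : Prop :=
  (∃ y z : G, simEq G y x ∧ simEq G z x ∧ zpowers y ≠ zpowers z) ∧
  ∀ y : G, simEq G y x → IsMaxCyc G y ∧ orderOf y = orderOf x

/-- The `≃`-class of `x` is of Type III: `G` is non-cyclic, the class is a union of
`r ≥ 2` `∼`-classes whose cyclic subgroups are maximal cyclic subgroups of prime order,
and at least two distinct orders occur. -/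
def TypeIII (x : G) : Prop :=
  ¬ IsCyclic G ∧
  (∃ y z : G, simEq G y x ∧ simEq G z x ∧ orderOf y ≠ orderOf z) ∧
  ∀ y : G, simEq G y x → IsMaxCyc G y ∧ (orderOf y).Prime

/-- The `≃`-class of `x` is of Type IV with parameter `(p, q)`: it is a union of exactly
two `∼`-classes of elements of distinct prime orders `p` and `q`, the corresponding cyclic
subgroups being non-maximal when `G` is non-cyclic, and maximal when `G` is cyclic. -/
def TypeIV (x : G) (p q : ℕ) : Prop :=
  p.Prime ∧ q.Prime ∧ p ≠ q ∧
  (∃ x₁ x₂ : G, simEq G x₁ x ∧ simEq G x₂ x ∧ orderOf x₁ = p ∧ orderOf x₂ = q ∧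
     ∀ y : G, simEq G y x → zpowers y = zpowers x₁ ∨ zpowers y = zpowers x₂) ∧
  ((¬ IsCyclic G ∧ ∀ y : G, simEq G y x → ¬ IsMaxCyc G y) ∨
   (IsCyclic G ∧ ∀ y : G, simEq G y x → IsMaxCyc G y))

/-- A `P(G)`-permutation: a permutation `σ` of `G` preserving element orders, mapping each
`∼`-class `[x]` onto `[x^σ]`, and preserving inclusion and non-inclusion of cyclic subgroups. -/
def IsPPerm (σ : Equiv.Perm G) : Prop :=
  (∀ x : G, orderOf (σ x) = orderOf x) ∧
  (∀ x : G, σ '' genCls G x = genCls G (σ x)) ∧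
  (∀ x y : G, zpowers y ≤ zpowers x ↔ zpowers (σ y) ≤ zpowers (σ x))

/-- A permutation of `G` fixing every `≃`-class setwise. -/
def FixesClasses (τ : Equiv.Perm G) : Prop := ∀ x : G, simEq G (τ x) x

theorem perm_apply_inv_self' {α : Type*} (f : Equiv.Perm α) (x : α) : f (f⁻¹ x) = x :=
  Equiv.apply_symm_apply f x
set_option linter.unusedSectionVars false
section Helpers
variable {G : Type*} [Group G] [Fintype G]

lemma card_z (a : G) : (zpowers a : Set G).ncard = orderOf a := by
  rw [← Nat.card_coe_set_eq]
  exact Nat.card_zpowers a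

lemma zpowers_eq_of_le_of_le {a b : G} (h : zpowers a ≤ zpowers b)
    (h2 : orderOf b ≤ orderOf a) : zpowers a = zpowers b := by
  have hs : (zpowers a : Set G) = (zpowers b : Set G) :=
    Set.eq_of_subset_of_ncard_le h (by rw [card_z, card_z]; exact h2) (Set.toFinite _)
  exact SetLike.ext' hs

lemma orderOf_eq_of_zpowers_eq {a b : G} (h : zpowers a = zpowers b) :
    orderOf a = orderOf b := by
  rw [← Nat.card_zpowers, ← Nat.card_zpowers, h]

lemma dvd_mul_prime {r s d : ℕ} (hr : r.Prime) (hs : s.Prime) (hd : d ∣ r * s) :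
    d = 1 ∨ d = r ∨ d = s ∨ d = r * s := by
  by_cases h : r ∣ d
  · obtain ⟨e, rfl⟩ := h
    have he : e ∣ s := (mul_dvd_mul_iff_left (a := r) (by exact_mod_cast hr.ne_zero)).mp hd
    rcases hs.eq_one_or_self_of_dvd e he with h1 | h1
    · subst h1; right; left; simp
    · subst h1; right; right; right; rfl
  · have hc : Nat.Coprime d r := Nat.Coprime.symm (hr.coprime_iff_not_dvd.mpr h)
    have : d ∣ s := hc.dvd_of_dvd_mul_left hd
    rcases hs.eq_one_or_self_of_dvd d this with h1 | h1
    · left; exact h1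
    · right; right; left; exact h1

lemma mem_of_pow_mem {H : Subgroup G} {w : G} {r s : ℕ} (hco : Nat.Coprime r s)
    (h1 : w ^ r ∈ H) (h2 : w ^ s ∈ H) : w ∈ H := by
  have hic : IsCoprime (r : ℤ) (s : ℤ) :=
    Int.isCoprime_iff_gcd_eq_one.mpr (by simpa using hco)
  obtain ⟨a, b, hab⟩ := hic
  have : w = (w ^ (r : ℤ)) ^ a * (w ^ (s : ℤ)) ^ b := by
    rw [← zpow_mul, ← zpow_mul, ← zpow_add, mul_comm ((r:ℤ)) a, mul_comm ((s:ℤ)) b, hab,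
      zpow_one]
  rw [this]
  exact mul_mem (H.zpow_mem (by simpa using h1) a) (H.zpow_mem (by simpa using h2) b)

lemma mem_zpowers_pow {w z : G} {r s : ℕ} (hw : orderOf w = r * s) (hr : r ≠ 0)
    (hz : z ∈ zpowers w) (h1 : z ^ r = 1) : z ∈ zpowers (w ^ s) := by
  obtain ⟨a, ha⟩ := Subgroup.mem_zpowers_iff.mp hz
  have hz1 : w ^ (a * (r : ℤ)) = 1 := by
    rw [zpow_mul, ha]; exact_mod_cast h1
  have hdvd : ((r * s : ℕ) : ℤ) ∣ a * r := by
    rw [← hw]; exact orderOf_dvd_iff_zpow_eq_one.mpr hz1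
  obtain ⟨k, hk⟩ := hdvd
  have ha2 : a = (s : ℤ) * k := by
    have hr' : (r : ℤ) ≠ 0 := by exact_mod_cast hr
    have : a * r = ((s : ℤ) * k) * r := by push_cast at hk; linarith
    exact mul_right_cancel₀ hr' this
  refine Subgroup.mem_zpowers_iff.mpr ⟨k, ?_⟩
  rw [← zpow_natCast, ← zpow_mul, ← ha, ha2]

lemma orderOf_pow_eq {w : G} {r s : ℕ} (hw : orderOf w = r * s) (hs : s ≠ 0) :
    orderOf (w ^ s) = r := by
  rw [orderOf_pow, hw]
  have : Nat.gcd (r * s) s = s := Nat.gcd_eq_right ⟨r, mul_comm r s⟩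
  rw [this, Nat.mul_div_cancel _ (Nat.pos_of_ne_zero hs)]
end Helpers
set_option linter.unusedSectionVars false

section Graph
variable {G : Type*} [Group G] [Fintype G]

lemma mem_DRPAut_iff {π : Equiv.Perm G} :
    π ∈ DRPAut G ↔ ∀ x y : G, rpArc G (π x) (π y) ↔ rpArc G x y := Iff.rfl

lemma simEq_refl (a : G) : simEq G a a := fun _ => Iff.rfl

lemma simEq_of_zpowers_eq {a b : G} (h : zpowers a = zpowers b) : simEq G a b := by
  intro z; unfold rpAdj; rw [h]

lemma drp_adj {π : Equiv.Perm G} (hπ : π ∈ DRPAut G) (a b : G) :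
    rpAdj G (π a) (π b) ↔ rpAdj G a b :=
  or_congr (hπ b a) (hπ a b)

lemma drp_simEq {π : Equiv.Perm G} (hπ : π ∈ DRPAut G) (a b : G) :
    simEq G (π a) (π b) ↔ simEq G a b := by
  constructor
  · intro h z
    rw [← drp_adj hπ a z, ← drp_adj hπ b z]
    exact h (π z)
  · intro h z
    have hz : z = π (π⁻¹ z) := (perm_apply_inv_self' π z).symm
    rw [hz, drp_adj hπ a _, drp_adj hπ b _]
    exact h (π⁻¹ z)

lemma drp_one {π : Equiv.Perm G} (hπ : π ∈ DRPAut G) : π 1 = 1 := by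
  have h : ∀ y : G, ¬ rpArc G (π 1) (π y) := by
    intro y hy
    have := (hπ 1 y).mp hy
    unfold rpArc at this
    rw [Subgroup.zpowers_one_eq_bot] at this
    exact not_lt_bot this
  have h2 : ¬ rpArc G (π 1) 1 := by
    have := h (π⁻¹ 1)
    rwa [perm_apply_inv_self'] at this
  unfold rpArc at h2
  rw [Subgroup.zpowers_one_eq_bot] at h2
  have : zpowers (π 1) = ⊥ := by
    by_contra hne
    exact h2 (Ne.bot_lt hne)
  rwa [Subgroup.zpowers_eq_bot] at this

/-- Partition counting: if the strict "out-set" of `w` is `{1} ∪ S`, then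
`orderOf w = |genCls w| + 1 + |S|`. -/
lemma partition_count {w : G} {S : Set G} (hw1 : w ≠ 1) (h1S : (1 : G) ∉ S)
    (h : ∀ z : G, zpowers z < zpowers w ↔ (z = 1 ∨ z ∈ S)) :
    orderOf w = (genCls G w).ncard + 1 + S.ncard := by
  have hsplit : (zpowers w : Set G) = genCls G w ∪ ({1} ∪ S) := by
    ext z
    constructor
    · intro hz
      have hle : zpowers z ≤ zpowers w := zpowers_le.mpr hz
      by_cases he : zpowers z = zpowers w
      · exact Or.inl he
      · exact Or.inr ((h z).mp (lt_of_le_of_ne hle he))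
    · rintro (hz | hz | hz)
      · rw [← hz]; exact Subgroup.mem_zpowers z
      · simp only [Set.mem_singleton_iff] at hz; subst hz; exact (zpowers w).one_mem
      · exact zpowers_le.mp (le_of_lt ((h z).mpr (Or.inr hz)))
  have hd1 : Disjoint ({1} : Set G) S := by
    rw [Set.disjoint_singleton_left]; exact h1S
  have hd2 : Disjoint (genCls G w) ({1} ∪ S) := by
    rw [Set.disjoint_union_right]
    constructor
    · rw [Set.disjoint_singleton_right]
      intro hz
      have : zpowers (1 : G) = zpowers w := hz
      rw [Subgroup.zpowers_one_eq_bot] at this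
      exact hw1 (by rwa [eq_comm, Subgroup.zpowers_eq_bot] at this)
    · rw [Set.disjoint_left]
      intro a ha haS
      have : zpowers a < zpowers w := (h a).mpr (Or.inr haS)
      exact (ne_of_lt this) ha
  calc orderOf w = (zpowers w : Set G).ncard := (card_z w).symm
    _ = (genCls G w ∪ ({1} ∪ S)).ncard := by rw [hsplit]
    _ = (genCls G w).ncard + (({1} : Set G) ∪ S).ncard :=
        Set.ncard_union_eq hd2 (Set.toFinite _) (Set.toFinite _)
    _ = (genCls G w).ncard + (1 + S.ncard) := by
        rw [Set.ncard_union_eq hd1 (Set.toFinite _) (Set.toFinite _), Set.ncard_singleton]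
    _ = (genCls G w).ncard + 1 + S.ncard := by ring
end Graph
lemma typeIV_arith {a b A B s : ℕ} (ha : 1 ≤ a) (hb : 1 ≤ b) (hs : s = a + b + 1)
    (hA : s * s = A + 1 + (a + b)) (hB : (a + 1) * (b + 1) = B + 1 + (a + b))
    (hAB : A ≤ B) : False := by
  subst hs
  nlinarith

set_option maxHeartbeats 2000000 in
theorem aut_DRP_typeIV {G : Type*} [Group G] [Fintype G]
    (π : Equiv.Perm G) (hπ : π ∈ DRPAut G) (x : G) (p q : ℕ) (hT : TypeIV G x p q) :
    TypeIV G (π x) p q := by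
  obtain ⟨hp, hq, hpq, ⟨x₁, x₂, h1, h2, ho1, ho2, hcover⟩, hmax⟩ := hT
  have hp1 := hp.one_lt
  have hq1 := hq.one_lt
  -- the cyclic case of the disjunction is impossible
  have hncm : ¬ IsCyclic G ∧ ∀ y : G, simEq G y x → ¬ IsMaxCyc G y := by
    rcases hmax with h | ⟨hc, hm⟩
    · exact h
    · exfalso
      obtain ⟨g, hg⟩ := hc
      have e1 : zpowers x₁ = zpowers g := hm x₁ h1 g (zpowers_le.mpr (hg x₁))
      have e2 : zpowers x₂ = zpowers g := hm x₂ h2 g (zpowers_le.mpr (hg x₂))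
      exact hpq (by rw [← ho1, ← ho2]; exact orderOf_eq_of_zpowers_eq (e1.trans e2.symm))
  obtain ⟨hnc, hnm⟩ := hncm
  have hpcop : Nat.Coprime p q := (Nat.coprime_primes hp hq).mpr hpq
  have hcov' : ∀ y : G, simEq G y x ↔ (zpowers y = zpowers x₁ ∨ zpowers y = zpowers x₂) := by
    intro y
    constructor
    · exact hcover y
    · rintro (h | h)
      · intro z; exact ((simEq_of_zpowers_eq h) z).trans (h1 z)
      · intro z; exact ((simEq_of_zpowers_eq h) z).trans (h2 z)
  have hx12 : zpowers x₁ ≠ zpowers x₂ := by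
    intro h
    exact hpq (by rw [← ho1, ← ho2]; exact orderOf_eq_of_zpowers_eq h)
  -- an element strictly above x₁ (and hence above x₂)
  have hnmax1 : ¬ IsMaxCyc G x₁ := hnm x₁ h1
  have hexu : ∃ u : G, zpowers x₁ < zpowers u := by
    by_contra hcon
    push_neg at hcon
    refine hnmax1 (fun y hy => ?_)
    by_contra hne
    exact (hcon y) (lt_of_le_of_ne hy hne)
  obtain ⟨u, hu1⟩ := hexu
  have hu2 : zpowers x₂ < zpowers u := by
    have hadj : rpAdj G x₂ u := (h2 u).mpr ((h1 u).mp (Or.inl hu1))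
    rcases hadj with h | h
    · exact h
    · exfalso
      have hlt : zpowers x₁ < zpowers x₂ := lt_trans hu1 h
      have hdvd : p ∣ q := by
        rw [← ho1, ← ho2]
        exact orderOf_dvd_of_mem_zpowers (zpowers_le.mp hlt.le)
      rcases hq.eq_one_or_self_of_dvd p hdvd with h' | h'
      · exact hp.ne_one h'
      · exact hpq h'
  -- the element w of order p*q
  have hx1u : x₁ ∈ zpowers u := zpowers_le.mp hu1.le
  have hx2u : x₂ ∈ zpowers u := zpowers_le.mp hu2.le
  obtain ⟨i, hi⟩ := Subgroup.mem_zpowers_iff.mp hx1u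
  obtain ⟨j, hj⟩ := Subgroup.mem_zpowers_iff.mp hx2u
  have hcomm : Commute x₁ x₂ := by
    rw [← hi, ← hj]; exact Commute.zpow_zpow (Commute.refl u) i j
  set w := x₁ * x₂ with hw_def
  have how : orderOf w = p * q := by
    rw [hw_def, hcomm.orderOf_mul_eq_mul_orderOf_of_coprime (by rw [ho1, ho2]; exact hpcop),
      ho1, ho2]
  have hpq_lt : 1 < p * q := by
    have := (lt_mul_iff_one_lt_right (by omega : (0:ℕ) < p)).mpr hq1
    omega
  have hw_ne : w ≠ 1 := by
    intro h
    rw [h, orderOf_one] at how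
    omega
  have hwq : w ^ q = x₁ ^ q := by
    rw [hw_def, hcomm.mul_pow, ← ho2, pow_orderOf_eq_one, mul_one]
  have hwp : w ^ p = x₂ ^ p := by
    rw [hw_def, hcomm.mul_pow, ← ho1, pow_orderOf_eq_one, one_mul]
  have hoq : orderOf (w ^ q) = p := orderOf_pow_eq how hq.pos.ne'
  have hop : orderOf (w ^ p) = q := orderOf_pow_eq (by rw [how, mul_comm]) hp.pos.ne'
  have hx1w : x₁ ∈ zpowers (w ^ q) := by
    refine mem_of_pow_mem hpcop ?_ ?_
    · rw [← ho1, pow_orderOf_eq_one]; exact one_mem _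
    · rw [← hwq]; exact Subgroup.mem_zpowers _
  have hx2w : x₂ ∈ zpowers (w ^ p) := by
    refine mem_of_pow_mem (Nat.Coprime.symm hpcop) ?_ ?_
    · rw [← ho2, pow_orderOf_eq_one]; exact one_mem _
    · rw [← hwp]; exact Subgroup.mem_zpowers _
  have hzx1 : zpowers x₁ = zpowers (w ^ q) :=
    zpowers_eq_of_le_of_le (zpowers_le.mpr hx1w) (by rw [hoq, ho1])
  have hzx2 : zpowers x₂ = zpowers (w ^ p) :=
    zpowers_eq_of_le_of_le (zpowers_le.mpr hx2w) (by rw [hop, ho2])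
  have hwq_mem : w ^ q ∈ zpowers w := (zpowers w).pow_mem (Subgroup.mem_zpowers w) q
  have hwp_mem : w ^ p ∈ zpowers w := (zpowers w).pow_mem (Subgroup.mem_zpowers w) p
  have hltw1 : zpowers x₁ < zpowers w := by
    refine lt_of_le_of_ne (by rw [hzx1]; exact zpowers_le.mpr hwq_mem) ?_
    intro h
    have := orderOf_eq_of_zpowers_eq h
    rw [ho1, how] at this
    have h2 : p < p * q := (lt_mul_iff_one_lt_right (by omega : (0:ℕ) < p)).mpr hq1
    omega
  have hltw2 : zpowers x₂ < zpowers w := by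
    refine lt_of_le_of_ne (by rw [hzx2]; exact zpowers_le.mpr hwp_mem) ?_
    intro h
    have := orderOf_eq_of_zpowers_eq h
    rw [ho2, how] at this
    have h2 : q < p * q := (lt_mul_iff_one_lt_left (by omega : (0:ℕ) < q)).mpr hp1
    omega
  -- out-set characterization of w
  have hout : ∀ z : G, zpowers z < zpowers w ↔ (z = 1 ∨ simEq G z x) := by
    intro z
    constructor
    · intro hz
      have hzmem : z ∈ zpowers w := zpowers_le.mp hz.le
      have hdvd : orderOf z ∣ p * q := by
        rw [← how]; exact orderOf_dvd_of_mem_zpowers hzmem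
      have hne : orderOf z ≠ p * q := by
        intro h
        exact (ne_of_lt hz) (zpowers_eq_of_le_of_le hz.le (by rw [how, h]))
      rcases dvd_mul_prime hp hq hdvd with h | h | h | h
      · left; exact orderOf_eq_one_iff.mp h
      · right
        have hz1 : z ^ p = 1 := by rw [← h]; exact pow_orderOf_eq_one z
        have hmem : z ∈ zpowers (w ^ q) := mem_zpowers_pow how hp.pos.ne' hzmem hz1
        have hzz : zpowers z = zpowers x₁ := by
          rw [hzx1]
          exact zpowers_eq_of_le_of_le (zpowers_le.mpr hmem) (by rw [hoq, h])
        exact (hcov' z).mpr (Or.inl hzz)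
      · right
        have hz1 : z ^ q = 1 := by rw [← h]; exact pow_orderOf_eq_one z
        have hmem : z ∈ zpowers (w ^ p) :=
          mem_zpowers_pow (by rw [how, mul_comm]) hq.pos.ne' hzmem hz1
        have hzz : zpowers z = zpowers x₂ := by
          rw [hzx2]
          exact zpowers_eq_of_le_of_le (zpowers_le.mpr hmem) (by rw [hop, h])
        exact (hcov' z).mpr (Or.inr hzz)
      · exact absurd h hne
    · rintro (rfl | hz)
      · rw [Subgroup.zpowers_one_eq_bot]
        exact bot_lt_iff_ne_bot.mpr (fun h => hw_ne (Subgroup.zpowers_eq_bot.mp h))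
      · rcases (hcov' z).mp hz with h | h
        · rw [h]; exact hltw1
        · rw [h]; exact hltw2
  have hx_ne : x ≠ 1 := by
    intro hx
    rcases (hcov' x).mp (simEq_refl x) with h | h
    · rw [hx, Subgroup.zpowers_one_eq_bot] at h
      have := Subgroup.zpowers_eq_bot.mp h.symm
      rw [this, orderOf_one] at ho1
      exact hp.ne_one ho1.symm
    · rw [hx, Subgroup.zpowers_one_eq_bot] at h
      have := Subgroup.zpowers_eq_bot.mp h.symm
      rw [this, orderOf_one] at ho2
      exact hq.ne_one ho2.symm
  have h1X : (1 : G) ∉ hatCls G x := by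
    intro h
    rcases (hcov' 1).mp h with hh | hh
    · rw [Subgroup.zpowers_one_eq_bot] at hh
      have := Subgroup.zpowers_eq_bot.mp hh.symm
      rw [this, orderOf_one] at ho1
      exact hp.ne_one ho1.symm
    · rw [Subgroup.zpowers_one_eq_bot] at hh
      have := Subgroup.zpowers_eq_bot.mp hh.symm
      rw [this, orderOf_one] at ho2
      exact hq.ne_one ho2.symm
  -- transport through π
  have hπarc : ∀ a b : G, rpArc G (π a) (π b) ↔ rpArc G a b := mem_DRPAut_iff.mp hπ
  have hπ1 : π 1 = 1 := drp_one hπ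
  have hinv1 : ∀ z : G, π⁻¹ z = 1 ↔ z = 1 := by
    intro z
    constructor
    · intro h
      have := congrArg π h
      rwa [perm_apply_inv_self', hπ1] at this
    · intro h
      rw [h]
      apply π.injective
      rw [perm_apply_inv_self', hπ1]
  have hinv2 : ∀ z : G, simEq G (π⁻¹ z) x ↔ simEq G z (π x) := by
    intro z
    have h2' := drp_simEq hπ (π⁻¹ z) x
    rw [perm_apply_inv_self'] at h2'
    exact h2'.symm
  set w' := π w with hw'_def
  have hout' : ∀ z : G, zpowers z < zpowers w' ↔ (z = 1 ∨ simEq G z (π x)) := by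
    intro z
    have h0 : rpArc G w' z ↔ rpArc G w (π⁻¹ z) := by
      have := hπarc w (π⁻¹ z)
      rwa [perm_apply_inv_self'] at this
    calc zpowers z < zpowers w' ↔ rpArc G w' z := Iff.rfl
      _ ↔ rpArc G w (π⁻¹ z) := h0
      _ ↔ (π⁻¹ z = 1 ∨ simEq G (π⁻¹ z) x) := hout (π⁻¹ z)
      _ ↔ (z = 1 ∨ simEq G z (π x)) := or_congr (hinv1 z) (hinv2 z)
  have hw'_ne : w' ≠ 1 := fun h => hw_ne (π.injective (by rw [hπ1]; exact h))
  have hm1 : orderOf w' ≠ 1 := fun h => hw'_ne (orderOf_eq_one_iff.mp h)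
  have hm0 : 0 < orderOf w' := orderOf_pos w'
  have hπx_in : zpowers (π x) < zpowers w' := (hout' (π x)).mpr (Or.inr (simEq_refl (π x)))
  have hπx_ne : π x ≠ 1 := fun h => hx_ne (π.injective (by rw [hπ1]; exact h))
  have h1Y : (1 : G) ∉ hatCls G (π x) := by
    intro h
    have h' := (hinv2 1).mpr h
    rw [(hinv1 1).mpr rfl] at h'
    exact h1X h'
  -- no arcs within the class of π x
  have harcfree : ∀ z z' : G, simEq G z (π x) → simEq G z' (π x) →
      ¬ zpowers z < zpowers z' := by
    intro z z' hz hz' hlt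
    have hadj : rpAdj G (π x) z := (hz' z).mp (Or.inr hlt)
    have h3 : rpAdj G z z := (hz z).mpr hadj
    rcases h3 with h | h <;> exact lt_irrefl _ h
  -- powers of w' which are proper and nontrivial lie in the class
  have hin : ∀ n : ℕ, orderOf (w' ^ n) ≠ 1 → orderOf (w' ^ n) ≠ orderOf w' →
      simEq G (w' ^ n) (π x) := by
    intro n hn1 hnm
    have hle : zpowers (w' ^ n) ≤ zpowers w' :=
      zpowers_le.mpr ((zpowers w').pow_mem (Subgroup.mem_zpowers w') n)
    have hlt : zpowers (w' ^ n) < zpowers w' :=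
      lt_of_le_of_ne hle (fun h => hnm (orderOf_eq_of_zpowers_eq h))
    rcases (hout' _).mp hlt with h | h
    · exact absurd (by rw [h, orderOf_one]) hn1
    · exact h
  -- every proper nontrivial divisor of orderOf w' is prime
  have hstar : ∀ d : ℕ, d ∣ orderOf w' → 1 < d → d < orderOf w' → d.Prime := by
    intro d hd hd1 hdm
    by_contra hnp
    set rr := d.minFac with hrr
    have hrrp : rr.Prime := Nat.minFac_prime (by omega)
    have hrrd : rr ∣ d := Nat.minFac_dvd d
    have hrrne : rr ≠ d := fun h => hnp (h ▸ hrrp)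
    have hrrlt : rr < d := lt_of_le_of_ne (Nat.le_of_dvd (by omega) hrrd) hrrne
    obtain ⟨k2, hk2⟩ := hd
    obtain ⟨k1, hk1⟩ := hrrd
    have hk2ne : k2 ≠ 0 := by rintro rfl; rw [mul_zero] at hk2; omega
    have hk1ne : k1 ≠ 0 := by rintro rfl; rw [mul_zero] at hk1; omega
    have ht2o : orderOf (w' ^ k2) = d := orderOf_pow_eq hk2 hk2ne
    have ht1o : orderOf (w' ^ (k1 * k2)) = rr :=
      orderOf_pow_eq (by rw [hk2, hk1, mul_assoc]) (by simp [hk1ne, hk2ne])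
    have hmem12 : w' ^ (k1 * k2) ∈ zpowers (w' ^ k2) := by
      rw [mul_comm k1 k2, pow_mul]
      exact (zpowers (w' ^ k2)).pow_mem (Subgroup.mem_zpowers _) k1
    have hlt12 : zpowers (w' ^ (k1 * k2)) < zpowers (w' ^ k2) := by
      refine lt_of_le_of_ne (zpowers_le.mpr hmem12) ?_
      intro h
      have := orderOf_eq_of_zpowers_eq h
      rw [ht1o, ht2o] at this
      omega
    have hs1 := hin k2 (by rw [ht2o]; omega) (by rw [ht2o]; omega)
    have hs2 := hin (k1 * k2) (by rw [ht1o]; exact hrrp.ne_one) (by rw [ht1o]; omega)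
    exact harcfree _ _ hs2 hs1 hlt12
  -- cardinalities
  have hYeq : hatCls G (π x) = π '' hatCls G x := by
    ext z
    constructor
    · intro hz
      exact ⟨π⁻¹ z, (hinv2 z).mpr hz, perm_apply_inv_self' π z⟩
    · rintro ⟨z₀, hz₀, rfl⟩
      exact (drp_simEq hπ z₀ x).mpr hz₀
  have hcardXY : (hatCls G (π x)).ncard = (hatCls G x).ncard := by
    rw [hYeq]; exact Set.ncard_image_of_injective _ π.injective
  have hprime_out : ∀ a : G, (orderOf a).Prime →
      ∀ z : G, zpowers z < zpowers a ↔ (z = 1 ∨ z ∈ (∅ : Set G)) := by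
    intro a ha z
    constructor
    · intro hz
      left
      have hdvd : orderOf z ∣ orderOf a := orderOf_dvd_of_mem_zpowers (zpowers_le.mp hz.le)
      rcases ha.eq_one_or_self_of_dvd _ hdvd with h | h
      · exact orderOf_eq_one_iff.mp h
      · exact absurd (zpowers_eq_of_le_of_le hz.le (le_of_eq h.symm)) (ne_of_lt hz)
    · rintro (rfl | hz)
      · rw [Subgroup.zpowers_one_eq_bot]
        refine bot_lt_iff_ne_bot.mpr (fun h => ?_)
        rw [Subgroup.zpowers_eq_bot] at h
        subst h
        simpa using ha.ne_one
      · exact absurd hz (Set.notMem_empty z)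
  have hgencount : ∀ a : G, (orderOf a).Prime → orderOf a = (genCls G a).ncard + 1 := by
    intro a ha
    have ha1 : a ≠ 1 := by
      intro h; subst h; simpa using ha.ne_one
    have := partition_count ha1 (Set.notMem_empty 1) (hprime_out a ha)
    simpa using this
  have hXsplit : hatCls G x = genCls G x₁ ∪ genCls G x₂ := by
    ext z
    simp only [hatCls, genCls, Set.mem_setOf_eq, Set.mem_union]
    exact hcov' z
  have hXdisj : Disjoint (genCls G x₁) (genCls G x₂) := by
    rw [Set.disjoint_left]
    intro a ha1 ha2
    exact hx12 ((Eq.symm ha1).trans ha2)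
  have hXcard : (hatCls G x).ncard = (genCls G x₁).ncard + (genCls G x₂).ncard := by
    rw [hXsplit]; exact Set.ncard_union_eq hXdisj (Set.toFinite _) (Set.toFinite _)
  have hc1 : p = (genCls G x₁).ncard + 1 := by
    rw [← ho1]; exact hgencount x₁ (by rw [ho1]; exact hp)
  have hc2 : q = (genCls G x₂).ncard + 1 := by
    rw [← ho2]; exact hgencount x₂ (by rw [ho2]; exact hq)
  have hWcount : p * q = (genCls G w).ncard + 1 + (hatCls G x).ncard := by
    rw [← how]; exact partition_count hw_ne h1X hout
  have hW'count : orderOf w' = (genCls G w').ncard + 1 + (hatCls G (π x)).ncard :=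
    partition_count hw'_ne h1Y hout'
  -- the sets M and M'
  set M : Set G := {v | ∀ z : G, rpArc G v z ↔ (z = 1 ∨ simEq G z x)} with hM_def
  set M' : Set G := {v | ∀ z : G, rpArc G v z ↔ (z = 1 ∨ simEq G z (π x))} with hM'_def
  have hMeq : M = genCls G w := by
    ext v
    simp only [hM_def, genCls, Set.mem_setOf_eq]
    constructor
    · intro hv
      have hx1v : x₁ ∈ zpowers v := zpowers_le.mp (le_of_lt ((hv x₁).mpr (Or.inr h1)))
      have hx2v : x₂ ∈ zpowers v := zpowers_le.mp (le_of_lt ((hv x₂).mpr (Or.inr h2)))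
      have hwv : w ∈ zpowers v := by rw [hw_def]; exact mul_mem hx1v hx2v
      have hle : zpowers w ≤ zpowers v := zpowers_le.mpr hwv
      rcases eq_or_lt_of_le hle with he | hlt
      · exact he.symm
      · exfalso
        rcases (hv w).mp hlt with h | h
        · exact hw_ne h
        · rcases (hcov' w).mp h with hh | hh
          · have := orderOf_eq_of_zpowers_eq hh
            rw [how, ho1] at this
            have h2 : p < p * q := (lt_mul_iff_one_lt_right (by omega : (0:ℕ) < p)).mpr hq1
            omega
          · have := orderOf_eq_of_zpowers_eq hh
            rw [how, ho2] at this
            have h2 : q < p * q := (lt_mul_iff_one_lt_left (by omega : (0:ℕ) < q)).mpr hp1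
            omega
    · intro hv z
      rw [show rpArc G v z ↔ zpowers z < zpowers v from Iff.rfl, hv]
      exact hout z
  have hM'img : M' = π '' M := by
    ext v
    simp only [hM_def, hM'_def, Set.mem_setOf_eq]
    constructor
    · intro hv
      refine ⟨π⁻¹ v, ?_, perm_apply_inv_self' π v⟩
      intro z
      have h0 : rpArc G (π⁻¹ v) z ↔ rpArc G v (π z) := by
        have := hπarc (π⁻¹ v) z
        rw [perm_apply_inv_self'] at this
        exact this.symm
      rw [h0, hv (π z)]
      constructor
      · rintro (h | h)
        · left; exact π.injective (by rw [h, hπ1])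
        · right; exact (drp_simEq hπ z x).mp h
      · rintro (rfl | h)
        · left; exact hπ1
        · right; exact (drp_simEq hπ z x).mpr h
    · rintro ⟨v₀, hv₀, rfl⟩
      intro z
      have h0 : rpArc G (π v₀) z ↔ rpArc G v₀ (π⁻¹ z) := by
        have := hπarc v₀ (π⁻¹ z)
        rw [perm_apply_inv_self'] at this
        exact this
      rw [h0, hv₀ (π⁻¹ z)]
      exact or_congr (hinv1 z) (hinv2 z)
  have hMcard : M'.ncard = (genCls G w).ncard := by
    rw [hM'img, Set.ncard_image_of_injective _ π.injective, hMeq]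
  -- analysis of orderOf w'
  set r := (orderOf w').minFac with hr_def
  have hrp : r.Prime := Nat.minFac_prime hm1
  obtain ⟨s, hmrs⟩ : ∃ s, orderOf w' = r * s := (orderOf w').minFac_dvd
  have hoπx_dvd : orderOf (π x) ∣ orderOf w' :=
    orderOf_dvd_of_mem_zpowers (zpowers_le.mp hπx_in.le)
  have hoπx_ne_m : orderOf (π x) ≠ orderOf w' := fun h =>
    (ne_of_lt hπx_in) (zpowers_eq_of_le_of_le hπx_in.le (le_of_eq h.symm))
  have hoπx_ne1 : orderOf (π x) ≠ 1 := fun h => hπx_ne (orderOf_eq_one_iff.mp h)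
  have hs_pos : s ≠ 0 := by
    intro h
    rw [h, mul_zero] at hmrs
    omega
  have hs_ne1 : s ≠ 1 := by
    intro h
    rw [h, mul_one] at hmrs
    rcases hrp.eq_one_or_self_of_dvd _ (hmrs ▸ hoπx_dvd) with hh | hh
    · exact hoπx_ne1 hh
    · exact hoπx_ne_m (by rw [hh, hmrs])
  have hr1 := hrp.one_lt
  have hs_lt : s < orderOf w' := by
    rw [hmrs]
    exact (lt_mul_iff_one_lt_left (Nat.pos_of_ne_zero hs_pos)).mpr hr1
  have hsp : s.Prime := hstar s ⟨r, by rw [hmrs, mul_comm]⟩ (by omega) hs_lt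
  have hs1 := hsp.one_lt
  have hts : orderOf (w' ^ s) = r := orderOf_pow_eq hmrs hs_pos
  have htr : orderOf (w' ^ r) = s := orderOf_pow_eq (by rw [hmrs, mul_comm]) hrp.pos.ne'
  -- rule out r = s (the prime-square case)
  have hrs_ne : r ≠ s := by
    intro hre
    have htop : (orderOf (w' ^ s)).Prime := by rw [hts]; exact hrp
    have hYgen : hatCls G (π x) = genCls G (w' ^ s) := by
      ext z
      simp only [hatCls, genCls, Set.mem_setOf_eq]
      constructor
      · intro hz
        have hlt : zpowers z < zpowers w' := (hout' z).mpr (Or.inr hz)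
        have hzmem : z ∈ zpowers w' := zpowers_le.mp hlt.le
        have hdvd : orderOf z ∣ r * s := by
          rw [← hmrs]; exact orderOf_dvd_of_mem_zpowers hzmem
        have hzne1 : z ≠ 1 := fun h => h1Y (h ▸ hz)
        have hone : orderOf z ≠ 1 := fun h => hzne1 (orderOf_eq_one_iff.mp h)
        have hnmz : orderOf z ≠ orderOf w' := fun h =>
          (ne_of_lt hlt) (zpowers_eq_of_le_of_le hlt.le (le_of_eq h.symm))
        have hzr : orderOf z = r := by
          rcases dvd_mul_prime hrp hsp hdvd with h | h | h | h
          · exact absurd h hone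
          · exact h
          · rw [h, hre]
          · exact absurd (by rw [h, hmrs]) hnmz
        have hmem2 : z ∈ zpowers (w' ^ s) :=
          mem_zpowers_pow hmrs hrp.pos.ne' hzmem (by rw [← hzr]; exact pow_orderOf_eq_one z)
        exact zpowers_eq_of_le_of_le (zpowers_le.mpr hmem2) (by rw [hts, hzr])
      · intro hz
        have hlt : zpowers z < zpowers w' := by
          rw [hz]
          refine lt_of_le_of_ne
            (zpowers_le.mpr ((zpowers w').pow_mem (Subgroup.mem_zpowers w') s)) ?_
          intro h
          have := orderOf_eq_of_zpowers_eq h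
          rw [hts, hmrs] at this
          have h2 : r < r * s := (lt_mul_iff_one_lt_right (by omega : (0:ℕ) < r)).mpr hs1
          omega
        rcases (hout' z).mp hlt with h | h
        · exfalso
          subst h
          rw [Subgroup.zpowers_one_eq_bot] at hz
          have := Subgroup.zpowers_eq_bot.mp hz.symm
          rw [this, orderOf_one] at hts
          exact hrp.ne_one hts.symm
        · exact h
    have hYcard : (hatCls G (π x)).ncard + 1 = r := by
      have hg := hgencount (w' ^ s) htop
      rw [hts] at hg
      rw [hYgen]
      omega
    have hsub : genCls G w' ⊆ M' := by
      intro v hv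
      simp only [hM'_def, Set.mem_setOf_eq]
      intro z
      have hv' : zpowers v = zpowers w' := hv
      rw [show rpArc G v z ↔ zpowers z < zpowers v from Iff.rfl, hv']
      exact hout' z
    have hle' : (genCls G w').ncard ≤ M'.ncard := Set.ncard_le_ncard hsub (Set.toFinite _)
    set A := (genCls G w').ncard
    set B := (genCls G w).ncard
    set a := (genCls G x₁).ncard
    set b := (genCls G x₂).ncard
    have hAB : A ≤ B := by rw [← hMcard]; exact hle'
    have hXab : (hatCls G x).ncard = a + b := hXcard
    have hYab : (hatCls G (π x)).ncard = a + b := by rw [hcardXY, hXab]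
    have hra : r = a + b + 1 := by omega
    have hBab : (a + 1) * (b + 1) = B + 1 + (a + b) := by
      rw [← hc1, ← hc2, hWcount, hXab]
    have hAab : s * s = A + 1 + (a + b) := by
      have h := hW'count
      rw [hmrs, hre, hYab] at h
      exact h
    have hs_eq : s = a + b + 1 := by omega
    exact typeIV_arith (by omega) (by omega) hs_eq hAab hBab hAB
  -- hence M' = genCls w' and orderOf w' = p * q
  have hco_rs : Nat.Coprime r s := (Nat.coprime_primes hrp hsp).mpr hrs_ne
  have hM'gen : M' = genCls G w' := by
    ext v
    simp only [hM'_def, genCls, Set.mem_setOf_eq]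
    constructor
    · intro hv
      have hmem : ∀ n : ℕ, orderOf (w' ^ n) ≠ 1 → orderOf (w' ^ n) ≠ orderOf w' →
          w' ^ n ∈ zpowers v := by
        intro n h1n h2n
        exact zpowers_le.mp (le_of_lt ((hv _).mpr (Or.inr (hin n h1n h2n))))
      have hrm : r < orderOf w' := by
        rw [hmrs]
        exact (lt_mul_iff_one_lt_right (by omega : (0:ℕ) < r)).mpr hs1
      have hsm : s < orderOf w' := hs_lt
      have hv_s : w' ^ s ∈ zpowers v := hmem s (by rw [hts]; exact hrp.ne_one) (by rw [hts]; omega)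
      have hv_r : w' ^ r ∈ zpowers v := hmem r (by rw [htr]; exact hsp.ne_one) (by rw [htr]; omega)
      have hwv : w' ∈ zpowers v := mem_of_pow_mem hco_rs hv_r hv_s
      have hle : zpowers w' ≤ zpowers v := zpowers_le.mpr hwv
      rcases eq_or_lt_of_le hle with he | hlt
      · exact he.symm
      · exfalso
        rcases (hv w').mp hlt with h | h
        · exact hw'_ne h
        · exact absurd ((hout' w').mpr (Or.inr h)) (lt_irrefl _)
    · intro hv z
      rw [show rpArc G v z ↔ zpowers z < zpowers v from Iff.rfl, hv]
      exact hout' z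
  have hm_pq : orderOf w' = p * q := by
    have e1 : (genCls G w').ncard = (genCls G w).ncard := by rw [← hM'gen, hMcard]
    omega
  -- final assembly
  have hoy1 : orderOf (w' ^ q) = p := orderOf_pow_eq hm_pq hq.pos.ne'
  have hoy2 : orderOf (w' ^ p) = q := orderOf_pow_eq (by rw [hm_pq, mul_comm]) hp.pos.ne'
  have hy1sim : simEq G (w' ^ q) (π x) := by
    refine hin q (by rw [hoy1]; exact hp.ne_one) ?_
    rw [hoy1, hm_pq]
    have : p < p * q := (lt_mul_iff_one_lt_right (by omega : (0:ℕ) < p)).mpr hq1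
    omega
  have hy2sim : simEq G (w' ^ p) (π x) := by
    refine hin p (by rw [hoy2]; exact hq.ne_one) ?_
    rw [hoy2, hm_pq]
    have : q < p * q := (lt_mul_iff_one_lt_left (by omega : (0:ℕ) < q)).mpr hp1
    omega
  refine ⟨hp, hq, hpq, ⟨w' ^ q, w' ^ p, hy1sim, hy2sim, hoy1, hoy2, ?_⟩, Or.inl ⟨hnc, ?_⟩⟩
  · intro y hy
    have hlt : zpowers y < zpowers w' := (hout' y).mpr (Or.inr hy)
    have hymem : y ∈ zpowers w' := zpowers_le.mp hlt.le
    have hdvd : orderOf y ∣ p * q := by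
      rw [← hm_pq]; exact orderOf_dvd_of_mem_zpowers hymem
    have hyne1 : y ≠ 1 := fun h => h1Y (h ▸ hy)
    have hone : orderOf y ≠ 1 := fun h => hyne1 (orderOf_eq_one_iff.mp h)
    have hnmy : orderOf y ≠ orderOf w' := fun h =>
      (ne_of_lt hlt) (zpowers_eq_of_le_of_le hlt.le (le_of_eq h.symm))
    rcases dvd_mul_prime hp hq hdvd with h | h | h | h
    · exact absurd h hone
    · left
      have hmem2 : y ∈ zpowers (w' ^ q) :=
        mem_zpowers_pow hm_pq hp.pos.ne' hymem (by rw [← h]; exact pow_orderOf_eq_one y)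
      exact zpowers_eq_of_le_of_le (zpowers_le.mpr hmem2) (by rw [hoy1, h])
    · right
      have hmem2 : y ∈ zpowers (w' ^ p) :=
        mem_zpowers_pow (by rw [hm_pq, mul_comm]) hq.pos.ne' hymem
          (by rw [← h]; exact pow_orderOf_eq_one y)
      exact zpowers_eq_of_le_of_le (zpowers_le.mpr hmem2) (by rw [hoy2, h])
    · exact absurd (by rw [h, hm_pq]) hnmy
  · intro y hy hmax'
    have hlt : zpowers y < zpowers w' := (hout' y).mpr (Or.inr hy)
    exact (ne_of_lt hlt) (hmax' w' hlt.le)
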